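/- For every ordered partition π = (B_1,…,B_k) ∈ OP(n,k), one has Σ_{i=1}^{k} (n − max B_i) + rsb(π) = lcs(π) + ros(π); in other words, the statistic mak(π) = Σ_{i=1}^{k} (n − clos_i) + rsb(π), where clos_i is the closer of the i-th block, equals lcs(π) + ros(π). -/

import Mathlib

lemma min_lt_coe_iff' {n : ℕ} (s : Finset (Fin n)) (h : s.Nonempty) (x : Fin n) :
    s.min < (↑x : WithBot (Fin n)) ↔ s.min' h < x := by
  rw [← Finset.coe_min' h]; exact WithTop.coe_lt_coe

lemma coe_lt_max_iff' {n : ℕ} (s : Finset (Fin n)) (h : s.Nonempty) (x : Fin n) :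
    (↑x : WithBot (Fin n)) < s.max ↔ x < s.max' h := by
  rw [← Finset.coe_max' h]; exact WithBot.coe_lt_coe

lemma min'_eq_of_min_eq {n : ℕ} (s : Finset (Fin n)) (h : s.Nonempty) (j : Fin n)
    (hj : s.min = ↑j) : s.min' h = j := by
  have := Finset.coe_min' h; rw [hj] at this; exact_mod_cast this

lemma max'_eq_of_max_eq {n : ℕ} (s : Finset (Fin n)) (h : s.Nonempty) (j : Fin n)
    (hj : s.max = ↑j) : s.max' h = j := by
  have := Finset.coe_max' h; rw [hj] at this; exact_mod_cast this

lemma opener_count {n k : ℕ} (B : Fin k → Finset (Fin n)) (hne : ∀ j, (B j).Nonempty)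
    (f : Fin n → Fin k) (hf : ∀ x, x ∈ B (f x)) (hfu : ∀ x j, x ∈ B j → j = f x)
    (x : Fin n) (r : Fin k → Fin k → Prop) [DecidableRel r] :
    ((Finset.univ : Finset (Fin n)).filter fun j =>
        j < x ∧ ∃ a b : Fin k, x ∈ B a ∧ j ∈ B b ∧ (B b).min = ↑j ∧ r a b).card
    = ((Finset.univ : Finset (Fin k)).filter fun b =>
        r (f x) b ∧ (B b).min' (hne b) < x).card := by
  apply Finset.card_bij (fun j _ => f j)
  · intro j hj
    simp only [Finset.mem_filter, Finset.mem_univ, true_and] at hj ⊢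
    obtain ⟨hjx, a, b, hxa, hjb, hmin, hab⟩ := hj
    have ha := hfu x a hxa
    have hb := hfu j b hjb
    subst ha; subst hb
    refine ⟨hab, ?_⟩
    rw [min'_eq_of_min_eq _ (hne (f j)) _ hmin]
    exact hjx
  · intro j1 h1 j2 h2 heq
    simp only [Finset.mem_filter, Finset.mem_univ, true_and] at h1 h2
    obtain ⟨_, a1, b1, _, hj1, hm1, _⟩ := h1
    obtain ⟨_, a2, b2, _, hj2, hm2, _⟩ := h2
    have hb1 := hfu j1 b1 hj1; subst hb1
    have hb2 := hfu j2 b2 hj2; subst hb2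
    rw [← min'_eq_of_min_eq _ (hne (f j1)) _ hm1, ← min'_eq_of_min_eq _ (hne (f j2)) _ hm2, heq]
  · intro b hb
    simp only [Finset.mem_filter, Finset.mem_univ, true_and] at hb
    obtain ⟨hrb, hlt⟩ := hb
    refine ⟨(B b).min' (hne b), ?_, (hfu _ b (Finset.min'_mem _ _)).symm⟩
    simp only [Finset.mem_filter, Finset.mem_univ, true_and]
    exact ⟨hlt, f x, b, hf x, Finset.min'_mem _ _, (Finset.coe_min' (hne b)).symm, hrb⟩

lemma closer_count {n k : ℕ} (B : Fin k → Finset (Fin n)) (hne : ∀ j, (B j).Nonempty)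
    (f : Fin n → Fin k) (hf : ∀ x, x ∈ B (f x)) (hfu : ∀ x j, x ∈ B j → j = f x)
    (x : Fin n) (r : Fin k → Fin k → Prop) [DecidableRel r] :
    ((Finset.univ : Finset (Fin n)).filter fun j =>
        j < x ∧ ∃ a b : Fin k, x ∈ B a ∧ j ∈ B b ∧ (B b).max = ↑j ∧ r a b).card
    = ((Finset.univ : Finset (Fin k)).filter fun b =>
        r (f x) b ∧ (B b).max' (hne b) < x).card := by
  apply Finset.card_bij (fun j _ => f j)
  · intro j hj
    simp only [Finset.mem_filter, Finset.mem_univ, true_and] at hj ⊢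
    obtain ⟨hjx, a, b, hxa, hjb, hmax, hab⟩ := hj
    have ha := hfu x a hxa
    have hb := hfu j b hjb
    subst ha; subst hb
    refine ⟨hab, ?_⟩
    rw [max'_eq_of_max_eq _ (hne (f j)) _ hmax]
    exact hjx
  · intro j1 h1 j2 h2 heq
    simp only [Finset.mem_filter, Finset.mem_univ, true_and] at h1 h2
    obtain ⟨_, a1, b1, _, hj1, hm1, _⟩ := h1
    obtain ⟨_, a2, b2, _, hj2, hm2, _⟩ := h2
    have hb1 := hfu j1 b1 hj1; subst hb1
    have hb2 := hfu j2 b2 hj2; subst hb2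
    rw [← max'_eq_of_max_eq _ (hne (f j1)) _ hm1, ← max'_eq_of_max_eq _ (hne (f j2)) _ hm2, heq]
  · intro b hb
    simp only [Finset.mem_filter, Finset.mem_univ, true_and] at hb
    obtain ⟨hrb, hlt⟩ := hb
    refine ⟨(B b).max' (hne b), ?_, (hfu _ b (Finset.max'_mem _ _)).symm⟩
    simp only [Finset.mem_filter, Finset.mem_univ, true_and]
    exact ⟨hlt, f x, b, hf x, Finset.max'_mem _ _, (Finset.coe_max' (hne b)).symm, hrb⟩
/-- Ordered partitions of `{1,…,n}` into `k` blocks. -/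
def OP (n k : ℕ) : Finset (Fin k → Finset (Fin n)) :=
  Finset.univ.filter fun B =>
    (∀ j, (B j).Nonempty) ∧ ∀ x : Fin n, ∃ j, x ∈ B j ∧ ∀ j', x ∈ B j' → j' = j

/-- `ros_i(π)`: the number of letters `j < i` that are the opener (least element) of
their block, with the block of `j` strictly to the right of the block of `i`. -/
def rosAt {n k : ℕ} (B : Fin k → Finset (Fin n)) (x : Fin n) : ℕ :=
  ((Finset.univ : Finset (Fin n)).filter fun j =>
    j < x ∧ ∃ a b : Fin k, x ∈ B a ∧ j ∈ B b ∧ (B b).min = ↑j ∧ a < b).card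

/-- `rob_i(π)`: letters `j > i` that are the opener of their block, lying in a block
strictly to the right of the block of `i`. -/
def robAt {n k : ℕ} (B : Fin k → Finset (Fin n)) (x : Fin n) : ℕ :=
  ((Finset.univ : Finset (Fin n)).filter fun j =>
    x < j ∧ ∃ a b : Fin k, x ∈ B a ∧ j ∈ B b ∧ (B b).min = ↑j ∧ a < b).card

/-- `rcs_i(π)`: letters `j < i` that are the closer (greatest element) of their block,
lying in a block strictly to the right of the block of `i`. -/
def rcsAt {n k : ℕ} (B : Fin k → Finset (Fin n)) (x : Fin n) : ℕ :=
  ((Finset.univ : Finset (Fin n)).filter fun j =>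
    j < x ∧ ∃ a b : Fin k, x ∈ B a ∧ j ∈ B b ∧ (B b).max = ↑j ∧ a < b).card

/-- `rcb_i(π)`: letters `j > i` that are the closer of their block, lying in a block
strictly to the right of the block of `i`. -/
def rcbAt {n k : ℕ} (B : Fin k → Finset (Fin n)) (x : Fin n) : ℕ :=
  ((Finset.univ : Finset (Fin n)).filter fun j =>
    x < j ∧ ∃ a b : Fin k, x ∈ B a ∧ j ∈ B b ∧ (B b).max = ↑j ∧ a < b).card

/-- Port helper: decidability of `(B b).min < (↑x : WithBot (Fin n))` (a `WithTop` comparison). -/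
instance rsbAtMinLTDecidable {n : ℕ} (a : WithTop (Fin n)) (x : Fin n) :
    Decidable (a < (↑x : WithBot (Fin n))) :=
  WithTop.decidableLT _ _

/-- `rsb_i(π)`: the number of blocks strictly to the right of the block of `i` whose
opener is smaller than `i` and whose closer is greater than `i`. -/
def rsbAt {n k : ℕ} (B : Fin k → Finset (Fin n)) (x : Fin n) : ℕ :=
  ((Finset.univ : Finset (Fin k)).filter fun b =>
    (∃ a : Fin k, x ∈ B a ∧ a < b) ∧
      (B b).min < (↑x : WithBot (Fin n)) ∧ (↑x : WithBot (Fin n)) < (B b).max).card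

/-- `ros(π)`: the sum of `ros_i(π)` over all letters `i`. -/
def ros {n k : ℕ} (B : Fin k → Finset (Fin n)) : ℕ := ∑ x : Fin n, rosAt B x

/-- `rob(π)`: the sum of `rob_i(π)` over all letters `i`. -/
def rob {n k : ℕ} (B : Fin k → Finset (Fin n)) : ℕ := ∑ x : Fin n, robAt B x

/-- `rcs(π)`: the sum of `rcs_i(π)` over all letters `i`. -/
def rcs {n k : ℕ} (B : Fin k → Finset (Fin n)) : ℕ := ∑ x : Fin n, rcsAt B x

/-- `rcb(π)`: the sum of `rcb_i(π)` over all letters `i`. -/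
def rcb {n k : ℕ} (B : Fin k → Finset (Fin n)) : ℕ := ∑ x : Fin n, rcbAt B x

/-- `rsb(π)`: the sum of `rsb_i(π)` over all letters `i`. -/
def rsb {n k : ℕ} (B : Fin k → Finset (Fin n)) : ℕ := ∑ x : Fin n, rsbAt B x

/-- `lcs_i(π)`: letters `j < i` that are the closer of their block, lying in a block
strictly to the left of the block of `i`. -/
def lcsAt {n k : ℕ} (B : Fin k → Finset (Fin n)) (x : Fin n) : ℕ :=
  ((Finset.univ : Finset (Fin n)).filter fun j =>
    j < x ∧ ∃ a b : Fin k, x ∈ B a ∧ j ∈ B b ∧ (B b).max = ↑j ∧ b < a).card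

/-- `lcs(π)`: the sum of `lcs_i(π)` over all letters `i`. -/
def lcs {n k : ℕ} (B : Fin k → Finset (Fin n)) : ℕ := ∑ x : Fin n, lcsAt B x

/-- The closer of the `j`-th block, as a (1-based) element of `{1,…,n}`:
the greatest element of `B j` (here letters in `Fin n` are 0-based, so the letter
`x` has 1-based value `x + 1`). -/
def closVal {n k : ℕ} (B : Fin k → Finset (Fin n)) (j : Fin k) : ℕ :=
  (B j).sup fun x => (x : ℕ) + 1

/-- `mak(π) = ∑_{i=1}^{k} (n - clos_i) + rsb(π)`, where `clos_i` is the closer of the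
`i`-th block. -/
def mak {n k : ℕ} (B : Fin k → Finset (Fin n)) : ℕ :=
  (∑ j : Fin k, (n - closVal B j)) + rsb B

/-- For every ordered partition `π ∈ OP(n,k)`:
`∑_{i=1}^{k} (n - clos_i) + rsb(π) = lcs(π) + ros(π)`, i.e. `mak(π) = lcs(π) + ros(π)`. -/
theorem mak_eq_lcs_add_ros (n k : ℕ) (B : Fin k → Finset (Fin n)) (hB : B ∈ OP n k) :
    mak B = lcs B + ros B := by
  simp only [OP, Finset.mem_filter, Finset.mem_univ, true_and] at hB
  obtain ⟨hne, hex⟩ := hB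
  choose f hf hfu using hex
  have hfu' : ∀ x j, x ∈ B j → j = f x := fun x j h => hfu x j h
  -- pointwise rewrites
  have hros : ∀ x : Fin n, rosAt B x
      = ((Finset.univ : Finset (Fin k)).filter fun b =>
          f x < b ∧ (B b).min' (hne b) < x).card := fun x =>
    opener_count B hne f hf hfu' x (· < ·)
  have hrcs : ∀ x : Fin n, rcsAt B x
      = ((Finset.univ : Finset (Fin k)).filter fun b =>
          f x < b ∧ (B b).max' (hne b) < x).card := fun x =>
    closer_count B hne f hf hfu' x (· < ·)
  have hlcs : ∀ x : Fin n, lcsAt B x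
      = ((Finset.univ : Finset (Fin k)).filter fun b =>
          b < f x ∧ (B b).max' (hne b) < x).card := fun x =>
    closer_count B hne f hf hfu' x (fun a b => b < a)
  have hrsb : ∀ x : Fin n, rsbAt B x
      = ((Finset.univ : Finset (Fin k)).filter fun b =>
          f x < b ∧ (B b).min' (hne b) < x ∧ x < (B b).max' (hne b)).card := by
    intro x
    unfold rsbAt
    congr 1
    apply Finset.filter_congr
    intro b _
    rw [min_lt_coe_iff' _ (hne b), coe_lt_max_iff' _ (hne b)]
    constructor
    · rintro ⟨⟨a, hxa, hab⟩, h2, h3⟩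
      exact ⟨(hfu' x a hxa) ▸ hab, h2, h3⟩
    · rintro ⟨h1, h2, h3⟩
      exact ⟨⟨f x, hf x, h1⟩, h2, h3⟩
  -- pointwise: rosAt = rcsAt + rsbAt
  have hpoint : ∀ x : Fin n, rosAt B x = rcsAt B x + rsbAt B x := by
    intro x
    rw [hros x, hrcs x, hrsb x]
    have hunion : ((Finset.univ : Finset (Fin k)).filter fun b =>
          f x < b ∧ (B b).min' (hne b) < x)
        = ((Finset.univ : Finset (Fin k)).filter fun b =>
            f x < b ∧ (B b).max' (hne b) < x)
          ∪ ((Finset.univ : Finset (Fin k)).filter fun b =>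
            f x < b ∧ (B b).min' (hne b) < x ∧ x < (B b).max' (hne b)) := by
      ext b
      simp only [Finset.mem_filter, Finset.mem_union, Finset.mem_univ, true_and]
      constructor
      · rintro ⟨h1, h2⟩
        rcases lt_trichotomy x ((B b).max' (hne b)) with h | h | h
        · exact Or.inr ⟨h1, h2, h⟩
        · exfalso
          have hxb : x ∈ B b := h ▸ Finset.max'_mem _ (hne b)
          exact absurd (hfu' x b hxb).symm (ne_of_lt h1)
        · exact Or.inl ⟨h1, h⟩
      · rintro (⟨h1, h2⟩ | ⟨h1, h2, _⟩)
        · exact ⟨h1, lt_of_le_of_lt (Finset.min'_le _ _ (Finset.max'_mem _ (hne b))) h2⟩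
        · exact ⟨h1, h2⟩
    rw [hunion, Finset.card_union_of_disjoint]
    rw [Finset.disjoint_left]
    intro b hb1 hb2
    simp only [Finset.mem_filter, Finset.mem_univ, true_and] at hb1 hb2
    exact absurd hb1.2 (lt_asymm hb2.2.2)
  -- closer value
  have hclos : ∀ j : Fin k, closVal B j = ((B j).max' (hne j) : ℕ) + 1 := by
    intro j
    apply le_antisymm
    · exact Finset.sup_le fun x hx => Nat.add_le_add_right (Finset.le_max' _ _ hx) 1
    · exact Finset.le_sup (f := fun x : Fin n => (x : ℕ) + 1) (Finset.max'_mem _ (hne j))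
  have hcard : ∀ j : Fin k, n - closVal B j
      = ((Finset.univ : Finset (Fin n)).filter fun x => (B j).max' (hne j) < x).card := by
    intro j
    rw [hclos j, Finset.filter_lt_eq_Ioi]
    simp [Nat.sub_sub]
    omega
  -- double counting
  have hdouble : ∑ j : Fin k, (n - closVal B j)
      = ∑ x : Fin n, ((Finset.univ : Finset (Fin k)).filter fun b =>
          (B b).max' (hne b) < x).card := by
    calc ∑ j : Fin k, (n - closVal B j)
        = ∑ j : Fin k, ((Finset.univ : Finset (Fin n)).filter fun x =>
            (B j).max' (hne j) < x).card := Finset.sum_congr rfl fun j _ => hcard j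
      _ = ∑ x : Fin n, ((Finset.univ : Finset (Fin k)).filter fun b =>
            (B b).max' (hne b) < x).card := by
          simp only [Finset.card_filter]
          exact Finset.sum_comm
  -- per-x split of the closer count
  have hsplit2 : ∀ x : Fin n, ((Finset.univ : Finset (Fin k)).filter fun b =>
        (B b).max' (hne b) < x).card = lcsAt B x + rcsAt B x := by
    intro x
    rw [hlcs x, hrcs x]
    have hunion : ((Finset.univ : Finset (Fin k)).filter fun b =>
          (B b).max' (hne b) < x)
        = ((Finset.univ : Finset (Fin k)).filter fun b =>
            b < f x ∧ (B b).max' (hne b) < x)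
          ∪ ((Finset.univ : Finset (Fin k)).filter fun b =>
            f x < b ∧ (B b).max' (hne b) < x) := by
      ext b
      simp only [Finset.mem_filter, Finset.mem_union, Finset.mem_univ, true_and]
      constructor
      · intro h
        rcases lt_trichotomy b (f x) with hb | hb | hb
        · exact Or.inl ⟨hb, h⟩
        · exfalso
          have : x ≤ (B b).max' (hne b) := Finset.le_max' _ _ (hb ▸ hf x)
          exact absurd (lt_of_le_of_lt this h) (lt_irrefl x)
        · exact Or.inr ⟨hb, h⟩
      · rintro (⟨_, h⟩ | ⟨_, h⟩) <;> exact h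
    rw [hunion, Finset.card_union_of_disjoint]
    rw [Finset.disjoint_left]
    intro b hb1 hb2
    simp only [Finset.mem_filter, Finset.mem_univ, true_and] at hb1 hb2
    exact absurd hb1.1 (lt_asymm hb2.1)
  -- assemble
  unfold mak lcs ros rsb
  rw [hdouble]
  calc (∑ x : Fin n, ((Finset.univ : Finset (Fin k)).filter fun b =>
          (B b).max' (hne b) < x).card) + ∑ x : Fin n, rsbAt B x
      = (∑ x : Fin n, (lcsAt B x + rcsAt B x)) + ∑ x : Fin n, rsbAt B x := by
        rw [Finset.sum_congr rfl fun x _ => hsplit2 x]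
    _ = (∑ x : Fin n, lcsAt B x) + ((∑ x : Fin n, rcsAt B x) + ∑ x : Fin n, rsbAt B x) := by
        rw [Finset.sum_add_distrib]; ring
    _ = (∑ x : Fin n, lcsAt B x) + ∑ x : Fin n, rosAt B x := by
        rw [← Finset.sum_add_distrib]
        congr 1
        exact Finset.sum_congr rfl fun x _ => (hpoint x).symm
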